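/- For every real number t₀ < 0, the restriction of the Burau specialization S_{t₀} : B₃ → GL₂(ℝ) to the subgroup N is injective, the image S_{t₀}(N) is a free group of rank 2, and S_{t₀}(N) is a discrete subgroup of GL₂(ℝ). -/

import Mathlib

open Matrix
open scoped MatrixGroups

/-- The braid relations on `m` generators. -/
def braidRels (m : ℕ) : Set (FreeGroup (Fin m)) :=
  { r | (∃ i j : Fin m, (i : ℕ) + 1 = (j : ℕ) ∧
          r = FreeGroup.of i * FreeGroup.of j * FreeGroup.of i *
              (FreeGroup.of j * FreeGroup.of i * FreeGroup.of j)⁻¹) ∨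
        (∃ i j : Fin m, (i : ℕ) + 2 ≤ (j : ℕ) ∧
          r = FreeGroup.of i * FreeGroup.of j * (FreeGroup.of j * FreeGroup.of i)⁻¹) }

/-- The braid group on `n` strands, presented by `n-1` generators and the braid relations. -/
abbrev BraidGroup (n : ℕ) : Type := PresentedGroup (braidRels (n - 1))

/-- The braid group on three strands. -/
abbrev B3 : Type := BraidGroup 3

/-- The standard generators of `B3`. -/
def b3 (i : Fin 2) : B3 := PresentedGroup.of i

/-- `S` is the Burau specialization of `B3` at the real parameter `t₀`. -/
def IsBurau3 (t₀ : ℝ) (S : B3 →* GL (Fin 2) ℝ) : Prop :=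
  (S (b3 0) : Matrix (Fin 2) (Fin 2) ℝ) = !![-t₀, 1; 0, 1] ∧
  (S (b3 1) : Matrix (Fin 2) (Fin 2) ℝ) = !![1, 0; t₀, -t₀]

/-- The element `a₁ = σ₁⁻¹σ₂` of `B3`. -/
def a₁ : B3 := (b3 0)⁻¹ * b3 1

/-- The element `a₂ = σ₂σ₁⁻¹` of `B3`. -/
def a₂ : B3 := b3 1 * (b3 0)⁻¹

/-- The (normal) subgroup `N` of `B3` generated by `a₁` and `a₂`. -/
def N3 : Subgroup B3 := Subgroup.closure {a₁, a₂}

/-! ### Auxiliary ping-pong machinery -/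

namespace BurauPP

abbrev Ltr := Fin 2 × Bool

def inv' (l : Ltr) : Ltr := (l.1, !l.2)

/-- The four ping-pong cones, as quadratic forms (nonnegative on the cone). -/
def Q (v : ℝ) (l : Ltr) (p : ℝ × ℝ) : ℝ :=
  if l.1 = 0 then (if l.2 then -p.2*(p.1 + v*p.2) else -p.1*(p.1 - p.2))
  else (if l.2 then -p.1*(p.1 + v*p.2) else p.2*(p.1 - p.2))

/-- Base points, one in the interior of each cone. -/
def bp (v : ℝ) (l : Ltr) : ℝ × ℝ :=
  if l.1 = 0 then (if l.2 then (1+v, -1) else (-1,-2)) else (if l.2 then (v,-2) else (-2,-1))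

/-- Image of a point under the matrix attached to each letter. -/
def imgp (u v : ℝ) (l : Ltr) (p : ℝ × ℝ) : ℝ × ℝ :=
  if l.1 = 0 then (if l.2 then ((1+v)*p.1 - p.2, -(u*p.1) + u*p.2) else (u*p.1 + p.2, u*p.1 + (1+v)*p.2))
  else (if l.2 then (v*p.1 - v*p.2, -p.1 + (1+u)*p.2) else ((1+u)*p.1 + v*p.2, p.1 + v*p.2))

/-- Linear action of a 2×2 matrix on a pair. -/
def act (M : Matrix (Fin 2) (Fin 2) ℝ) (p : ℝ × ℝ) : ℝ × ℝ :=
  (M 0 0 * p.1 + M 0 1 * p.2, M 1 0 * p.1 + M 1 1 * p.2)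

lemma act_mul (M N : Matrix (Fin 2) (Fin 2) ℝ) (p : ℝ × ℝ) :
    act (M * N) p = act M (act N p) := by
  simp only [act, Matrix.mul_apply, Fin.sum_univ_two]
  exact Prod.ext (by ring) (by ring)

lemma act_one (p : ℝ × ℝ) : act 1 p = p := by
  simp [act, Matrix.one_apply]

lemma Qbp (v : ℝ) (hv : 0 < v) : ∀ l : Ltr, 0 ≤ Q v l (bp v l) := by
  rintro ⟨i, b⟩
  fin_cases i <;> cases b
  · show (0:ℝ) ≤ -(-1)*((-1) - (-2)); norm_num
  · show (0:ℝ) ≤ -(-1)*((1+v) + v*(-1)); norm_num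
  · show (0:ℝ) ≤ (-1)*((-2) - (-1)); norm_num
  · show (0:ℝ) ≤ -v*(v + v*(-2)); nlinarith [sq_nonneg v]

lemma pick : ∀ a b : Ltr, ∃ c : Ltr, c ≠ a ∧ c ≠ b := by decide

lemma chain'_of_reduced : ∀ (L : List Ltr),
    (∀ (L₂ : List Ltr) (a : Ltr) (L₃ : List Ltr), L ≠ L₂ ++ a :: inv' a :: L₃) →
    List.Chain' (fun a b => b ≠ inv' a) L
  | [], _ => List.isChain_nil
  | [a], _ => List.isChain_singleton a
  | (a :: b :: t), H => by
      refine List.isChain_cons_cons.mpr ?_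
      refine ⟨fun hb => H [] a t (by rw [hb]; rfl), ?_⟩
      exact chain'_of_reduced (b :: t) (fun L₂ c L₃ hEq => H (a :: L₂) c L₃ (by rw [List.cons_append, ← hEq]))

lemma chain'_toWord (w : FreeGroup (Fin 2)) :
    List.Chain' (fun a b => b ≠ inv' a) w.toWord := by
  apply chain'_of_reduced
  intro L₂ a L₃ hEq
  exact FreeGroup.reduce.not (L₂ := L₂) (L₃ := L₃) (x := a.1) (b := a.2)
    ((FreeGroup.reduce_toWord w).trans hEq)

lemma step (u v : ℝ) (hu : 0 < u) (hv : 0 < v) (huv : u*v = 1) :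
    ∀ g h : Ltr, h ≠ inv' g → ∀ x y : ℝ, 0 ≤ Q v h (x,y) → 0 ≤ Q v g (imgp u v g (x,y)) := by
  rintro ⟨gi, gb⟩ ⟨hi, hb⟩ hne x y hQ
  fin_cases gi <;> fin_cases hi <;> cases gb <;> cases hb
  · have h' : (0:ℝ) ≤ -(x)*((x) - (y)) := hQ
    show (0:ℝ) ≤ -(u*x + y)*((u*x + y) - (u*x + (1+v)*y))
    have key : -(u*x + y)*((u*x + y) - (u*x + (1+v)*y)) = -(x)*((x) - (y)) + x^2 + v*y^2 := by
      linear_combination (x*y) * huv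
    have t0 : (0:ℝ) ≤ -(x)*((x) - (y)) := h'
    have t1 : (0:ℝ) ≤ x^2 := sq_nonneg x
    have t2 : (0:ℝ) ≤ v*y^2 := mul_nonneg hv.le (sq_nonneg y)
    linarith [key, t0, t1, t2]
  · exact absurd rfl hne
  · exact absurd rfl hne
  · have h' : (0:ℝ) ≤ -(y)*((x) + v*(y)) := hQ
    show (0:ℝ) ≤ -(-(u*x) + u*y)*(((1+v)*x - y) + v*(-(u*x) + u*y))
    have key : -(-(u*x) + u*y)*(((1+v)*x - y) + v*(-(u*x) + u*y)) = -(y)*((x) + v*(y)) + x^2 + v*y^2 := by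
      linear_combination (-(x*y) + x^2 - u*y^2 + 2*u*x*y - u*x^2) * huv
    have t0 : (0:ℝ) ≤ -(y)*((x) + v*(y)) := h'
    have t1 : (0:ℝ) ≤ x^2 := sq_nonneg x
    have t2 : (0:ℝ) ≤ v*y^2 := mul_nonneg hv.le (sq_nonneg y)
    linarith [key, t0, t1, t2]
  · have h' : (0:ℝ) ≤ (y)*((x) - (y)) := hQ
    show (0:ℝ) ≤ -(u*x + y)*((u*x + y) - (u*x + (1+v)*y))
    have key : -(u*x + y)*((u*x + y) - (u*x + (1+v)*y)) = (y)*((x) - (y)) + (1+v)*y^2 := by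
      linear_combination (x*y) * huv
    have t0 : (0:ℝ) ≤ (y)*((x) - (y)) := h'
    have t1 : (0:ℝ) ≤ (1+v)*y^2 := mul_nonneg (by linarith : (0:ℝ) ≤ 1+v) (sq_nonneg y)
    linarith [key, t0, t1]
  · have h' : (0:ℝ) ≤ -(x)*((x) + v*(y)) := hQ
    show (0:ℝ) ≤ -(u*x + y)*((u*x + y) - (u*x + (1+v)*y))
    have key : -(u*x + y)*((u*x + y) - (u*x + (1+v)*y)) = u*(-(x)*((x) + v*(y))) + u*(x + v*y)^2 := by
      linear_combination (-(v*y^2)) * huv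
    have t0 : (0:ℝ) ≤ u*(-(x)*((x) + v*(y))) := mul_nonneg hu.le h'
    have t1 : (0:ℝ) ≤ u*(x + v*y)^2 := mul_nonneg hu.le (sq_nonneg (x + v*y))
    linarith [key, t0, t1]
  · have h' : (0:ℝ) ≤ (y)*((x) - (y)) := hQ
    show (0:ℝ) ≤ -(-(u*x) + u*y)*(((1+v)*x - y) + v*(-(u*x) + u*y))
    have key : -(-(u*x) + u*y)*(((1+v)*x - y) + v*(-(u*x) + u*y)) = (y)*((x) - (y)) + (x - y)^2 := by
      linear_combination (-(x*y) + x^2 - u*y^2 + 2*u*x*y - u*x^2) * huv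
    have t0 : (0:ℝ) ≤ (y)*((x) - (y)) := h'
    have t1 : (0:ℝ) ≤ (x - y)^2 := sq_nonneg (x - y)
    linarith [key, t0, t1]
  · have h' : (0:ℝ) ≤ -(x)*((x) + v*(y)) := hQ
    show (0:ℝ) ≤ -(-(u*x) + u*y)*(((1+v)*x - y) + v*(-(u*x) + u*y))
    have key : -(-(u*x) + u*y)*(((1+v)*x - y) + v*(-(u*x) + u*y)) = u*(-(x)*((x) + v*(y))) + (1+u)*x^2 := by
      linear_combination (x^2 - u*y^2 + 2*u*x*y - u*x^2) * huv
    have t0 : (0:ℝ) ≤ u*(-(x)*((x) + v*(y))) := mul_nonneg hu.le h'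
    have t1 : (0:ℝ) ≤ (1+u)*x^2 := mul_nonneg (by linarith : (0:ℝ) ≤ 1+u) (sq_nonneg x)
    linarith [key, t0, t1]
  · have h' : (0:ℝ) ≤ -(x)*((x) - (y)) := hQ
    show (0:ℝ) ≤ (x + v*y)*(((1+u)*x + v*y) - (x + v*y))
    have key : (x + v*y)*(((1+u)*x + v*y) - (x + v*y)) = -(x)*((x) - (y)) + (1+u)*x^2 := by
      linear_combination (x*y) * huv
    have t0 : (0:ℝ) ≤ -(x)*((x) - (y)) := h'
    have t1 : (0:ℝ) ≤ (1+u)*x^2 := mul_nonneg (by linarith : (0:ℝ) ≤ 1+u) (sq_nonneg x)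
    linarith [key, t0, t1]
  · have h' : (0:ℝ) ≤ -(y)*((x) + v*(y)) := hQ
    show (0:ℝ) ≤ (x + v*y)*(((1+u)*x + v*y) - (x + v*y))
    have key : (x + v*y)*(((1+u)*x + v*y) - (x + v*y)) = -(y)*((x) + v*(y)) + u*(x + v*y)^2 := by
      linear_combination (-(x*y) - v*y^2) * huv
    have t0 : (0:ℝ) ≤ -(y)*((x) + v*(y)) := h'
    have t1 : (0:ℝ) ≤ u*(x + v*y)^2 := mul_nonneg hu.le (sq_nonneg (x + v*y))
    linarith [key, t0, t1]
  · have h' : (0:ℝ) ≤ -(x)*((x) - (y)) := hQ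
    show (0:ℝ) ≤ -(v*x - v*y)*((v*x - v*y) + v*(-x + (1+u)*y))
    have key : -(v*x - v*y)*((v*x - v*y) + v*(-x + (1+u)*y)) = v*(-(x)*((x) - (y))) + v*(x - y)^2 := by
      linear_combination (v*y^2 - v*x*y) * huv
    have t0 : (0:ℝ) ≤ v*(-(x)*((x) - (y))) := mul_nonneg hv.le h'
    have t1 : (0:ℝ) ≤ v*(x - y)^2 := mul_nonneg hv.le (sq_nonneg (x - y))
    linarith [key, t0, t1]
  · have h' : (0:ℝ) ≤ -(y)*((x) + v*(y)) := hQ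
    show (0:ℝ) ≤ -(v*x - v*y)*((v*x - v*y) + v*(-x + (1+u)*y))
    have key : -(v*x - v*y)*((v*x - v*y) + v*(-x + (1+u)*y)) = v*(-(y)*((x) + v*(y))) + (v+v^2)*y^2 := by
      linear_combination (v*y^2 - v*x*y) * huv
    have t0 : (0:ℝ) ≤ v*(-(y)*((x) + v*(y))) := mul_nonneg hv.le h'
    have t1 : (0:ℝ) ≤ (v+v^2)*y^2 := mul_nonneg (by nlinarith [hv, sq_nonneg v] : (0:ℝ) ≤ v+v^2) (sq_nonneg y)
    linarith [key, t0, t1]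
  · have h' : (0:ℝ) ≤ (y)*((x) - (y)) := hQ
    show (0:ℝ) ≤ (x + v*y)*(((1+u)*x + v*y) - (x + v*y))
    have key : (x + v*y)*(((1+u)*x + v*y) - (x + v*y)) = (y)*((x) - (y)) + u*x^2 + y^2 := by
      linear_combination (x*y) * huv
    have t0 : (0:ℝ) ≤ (y)*((x) - (y)) := h'
    have t1 : (0:ℝ) ≤ u*x^2 := mul_nonneg hu.le (sq_nonneg x)
    have t2 : (0:ℝ) ≤ y^2 := sq_nonneg y
    linarith [key, t0, t1, t2]
  · exact absurd rfl hne
  · exact absurd rfl hne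
  · have h' : (0:ℝ) ≤ -(x)*((x) + v*(y)) := hQ
    show (0:ℝ) ≤ -(v*x - v*y)*((v*x - v*y) + v*(-x + (1+u)*y))
    have key : -(v*x - v*y)*((v*x - v*y) + v*(-x + (1+u)*y)) = -(x)*((x) + v*(y)) + x^2 + v*y^2 := by
      linear_combination (v*y^2 - v*x*y) * huv
    have t0 : (0:ℝ) ≤ -(x)*((x) + v*(y)) := h'
    have t1 : (0:ℝ) ≤ x^2 := sq_nonneg x
    have t2 : (0:ℝ) ≤ v*y^2 := mul_nonneg hv.le (sq_nonneg y)
    linarith [key, t0, t1, t2]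

lemma sepBox (u v m : ℝ) (hu : 0 < u) (hv : 0 < v) (huv : u*v = 1)
    (hm0 : 0 < m) (h8v : 8*m ≤ v) (h8u : 8*m ≤ u) (h81 : 8*m ≤ 1) :
    ∀ g l : Ltr, g ≠ l → ∀ x y : ℝ, |x - (bp v l).1| ≤ m → |y - (bp v l).2| ≤ m →
      Q v g (x, y) < 0 := by
  have hmv : m * v ≤ 1/8 := by nlinarith [mul_le_mul_of_nonneg_right h8u hv.le]
  have hmv2 : m * v ≤ v/8 := by nlinarith [mul_le_mul_of_nonneg_right h81 hv.le]
  rintro ⟨gi, gb⟩ ⟨li, lb⟩ hne x y hx hy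
  fin_cases gi <;> fin_cases li <;> cases gb <;> cases lb
  · exact absurd rfl hne
  · have hx1 : -m ≤ x - (1+v) ∧ x - (1+v) ≤ m := abs_le.mp hx
    have hy1 : -m ≤ y - (-1) ∧ y - (-1) ≤ m := abs_le.mp hy
    show -x*(x - y) < 0
    have f1 : (-x : ℝ) < 0 := by linarith [hx1.1, hx1.2, hy1.1, hy1.2, hv, hu, hm0, h8v, h8u, h81, hmv, hmv2]
    have f2 : (0:ℝ) < x - y := by linarith [hx1.1, hx1.2, hy1.1, hy1.2, hv, hu, hm0, h8v, h8u, h81, hmv, hmv2]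
    exact mul_neg_of_neg_of_pos f1 f2
  · have hx1 : -m ≤ x - (-1) ∧ x - (-1) ≤ m := abs_le.mp hx
    have hy1 : -m ≤ y - (-2) ∧ y - (-2) ≤ m := abs_le.mp hy
    have hvy : v*y ≤ v*(-2+m) := mul_le_mul_of_nonneg_left (by linarith [hy1.1, hy1.2] : y ≤ -2+m) hv.le
    show -y*(x + v*y) < 0
    have f1 : (0:ℝ) < -y := by linarith [hx1.1, hx1.2, hy1.1, hy1.2, hv, hu, hm0, h8v, h8u, h81, hmv, hmv2]
    have f2 : (x + v*y : ℝ) < 0 := by linarith [hx1.1, hx1.2, hy1.1, hy1.2, hv, hu, hm0, h8v, h8u, h81, hmv, hmv2, hvy]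
    exact mul_neg_of_pos_of_neg f1 f2
  · exact absurd rfl hne
  · have hx1 : -m ≤ x - (-2) ∧ x - (-2) ≤ m := abs_le.mp hx
    have hy1 : -m ≤ y - (-1) ∧ y - (-1) ≤ m := abs_le.mp hy
    show -x*(x - y) < 0
    have f1 : (0:ℝ) < -x := by linarith [hx1.1, hx1.2, hy1.1, hy1.2, hv, hu, hm0, h8v, h8u, h81, hmv, hmv2]
    have f2 : (x - y : ℝ) < 0 := by linarith [hx1.1, hx1.2, hy1.1, hy1.2, hv, hu, hm0, h8v, h8u, h81, hmv, hmv2]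
    exact mul_neg_of_pos_of_neg f1 f2
  · have hx1 : -m ≤ x - (v) ∧ x - (v) ≤ m := abs_le.mp hx
    have hy1 : -m ≤ y - (-2) ∧ y - (-2) ≤ m := abs_le.mp hy
    show -x*(x - y) < 0
    have f1 : (-x : ℝ) < 0 := by linarith [hx1.1, hx1.2, hy1.1, hy1.2, hv, hu, hm0, h8v, h8u, h81, hmv, hmv2]
    have f2 : (0:ℝ) < x - y := by linarith [hx1.1, hx1.2, hy1.1, hy1.2, hv, hu, hm0, h8v, h8u, h81, hmv, hmv2]
    exact mul_neg_of_neg_of_pos f1 f2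
  · have hx1 : -m ≤ x - (-2) ∧ x - (-2) ≤ m := abs_le.mp hx
    have hy1 : -m ≤ y - (-1) ∧ y - (-1) ≤ m := abs_le.mp hy
    have hvy : v*y ≤ v*(-1+m) := mul_le_mul_of_nonneg_left (by linarith [hy1.1, hy1.2] : y ≤ -1+m) hv.le
    show -y*(x + v*y) < 0
    have f1 : (0:ℝ) < -y := by linarith [hx1.1, hx1.2, hy1.1, hy1.2, hv, hu, hm0, h8v, h8u, h81, hmv, hmv2]
    have f2 : (x + v*y : ℝ) < 0 := by linarith [hx1.1, hx1.2, hy1.1, hy1.2, hv, hu, hm0, h8v, h8u, h81, hmv, hmv2, hvy]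
    exact mul_neg_of_pos_of_neg f1 f2
  · have hx1 : -m ≤ x - (v) ∧ x - (v) ≤ m := abs_le.mp hx
    have hy1 : -m ≤ y - (-2) ∧ y - (-2) ≤ m := abs_le.mp hy
    have hvy : v*y ≤ v*(-2+m) := mul_le_mul_of_nonneg_left (by linarith [hy1.1, hy1.2] : y ≤ -2+m) hv.le
    show -y*(x + v*y) < 0
    have f1 : (0:ℝ) < -y := by linarith [hx1.1, hx1.2, hy1.1, hy1.2, hv, hu, hm0, h8v, h8u, h81, hmv, hmv2]
    have f2 : (x + v*y : ℝ) < 0 := by linarith [hx1.1, hx1.2, hy1.1, hy1.2, hv, hu, hm0, h8v, h8u, h81, hmv, hmv2, hvy]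
    exact mul_neg_of_pos_of_neg f1 f2
  · have hx1 : -m ≤ x - (-1) ∧ x - (-1) ≤ m := abs_le.mp hx
    have hy1 : -m ≤ y - (-2) ∧ y - (-2) ≤ m := abs_le.mp hy
    show y*(x - y) < 0
    have f1 : (y : ℝ) < 0 := by linarith [hx1.1, hx1.2, hy1.1, hy1.2, hv, hu, hm0, h8v, h8u, h81, hmv, hmv2]
    have f2 : (0:ℝ) < x - y := by linarith [hx1.1, hx1.2, hy1.1, hy1.2, hv, hu, hm0, h8v, h8u, h81, hmv, hmv2]
    exact mul_neg_of_neg_of_pos f1 f2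
  · have hx1 : -m ≤ x - (1+v) ∧ x - (1+v) ≤ m := abs_le.mp hx
    have hy1 : -m ≤ y - (-1) ∧ y - (-1) ≤ m := abs_le.mp hy
    show y*(x - y) < 0
    have f1 : (y : ℝ) < 0 := by linarith [hx1.1, hx1.2, hy1.1, hy1.2, hv, hu, hm0, h8v, h8u, h81, hmv, hmv2]
    have f2 : (0:ℝ) < x - y := by linarith [hx1.1, hx1.2, hy1.1, hy1.2, hv, hu, hm0, h8v, h8u, h81, hmv, hmv2]
    exact mul_neg_of_neg_of_pos f1 f2
  · have hx1 : -m ≤ x - (-1) ∧ x - (-1) ≤ m := abs_le.mp hx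
    have hy1 : -m ≤ y - (-2) ∧ y - (-2) ≤ m := abs_le.mp hy
    have hvy : v*y ≤ v*(-2+m) := mul_le_mul_of_nonneg_left (by linarith [hy1.1, hy1.2] : y ≤ -2+m) hv.le
    show -x*(x + v*y) < 0
    have f1 : (0:ℝ) < -x := by linarith [hx1.1, hx1.2, hy1.1, hy1.2, hv, hu, hm0, h8v, h8u, h81, hmv, hmv2]
    have f2 : (x + v*y : ℝ) < 0 := by linarith [hx1.1, hx1.2, hy1.1, hy1.2, hv, hu, hm0, h8v, h8u, h81, hmv, hmv2, hvy]
    exact mul_neg_of_pos_of_neg f1 f2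
  · have hx1 : -m ≤ x - (1+v) ∧ x - (1+v) ≤ m := abs_le.mp hx
    have hy1 : -m ≤ y - (-1) ∧ y - (-1) ≤ m := abs_le.mp hy
    have hvy : v*(-1-m) ≤ v*y := mul_le_mul_of_nonneg_left (by linarith [hy1.1, hy1.2] : -1-m ≤ y) hv.le
    show -x*(x + v*y) < 0
    have f1 : (-x : ℝ) < 0 := by linarith [hx1.1, hx1.2, hy1.1, hy1.2, hv, hu, hm0, h8v, h8u, h81, hmv, hmv2]
    have f2 : (0:ℝ) < x + v*y := by linarith [hx1.1, hx1.2, hy1.1, hy1.2, hv, hu, hm0, h8v, h8u, h81, hmv, hmv2, hvy]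
    exact mul_neg_of_neg_of_pos f1 f2
  · exact absurd rfl hne
  · have hx1 : -m ≤ x - (v) ∧ x - (v) ≤ m := abs_le.mp hx
    have hy1 : -m ≤ y - (-2) ∧ y - (-2) ≤ m := abs_le.mp hy
    show y*(x - y) < 0
    have f1 : (y : ℝ) < 0 := by linarith [hx1.1, hx1.2, hy1.1, hy1.2, hv, hu, hm0, h8v, h8u, h81, hmv, hmv2]
    have f2 : (0:ℝ) < x - y := by linarith [hx1.1, hx1.2, hy1.1, hy1.2, hv, hu, hm0, h8v, h8u, h81, hmv, hmv2]
    exact mul_neg_of_neg_of_pos f1 f2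
  · have hx1 : -m ≤ x - (-2) ∧ x - (-2) ≤ m := abs_le.mp hx
    have hy1 : -m ≤ y - (-1) ∧ y - (-1) ≤ m := abs_le.mp hy
    have hvy : v*y ≤ v*(-1+m) := mul_le_mul_of_nonneg_left (by linarith [hy1.1, hy1.2] : y ≤ -1+m) hv.le
    show -x*(x + v*y) < 0
    have f1 : (0:ℝ) < -x := by linarith [hx1.1, hx1.2, hy1.1, hy1.2, hv, hu, hm0, h8v, h8u, h81, hmv, hmv2]
    have f2 : (x + v*y : ℝ) < 0 := by linarith [hx1.1, hx1.2, hy1.1, hy1.2, hv, hu, hm0, h8v, h8u, h81, hmv, hmv2, hvy]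
    exact mul_neg_of_pos_of_neg f1 f2
  · exact absurd rfl hne


lemma ping (u v : ℝ) (glf : Ltr → GL (Fin 2) ℝ)
    (hstep : ∀ g h : Ltr, h ≠ inv' g → ∀ p : ℝ × ℝ, 0 ≤ Q v h p →
      0 ≤ Q v g (act ((glf g : GL (Fin 2) ℝ) : Matrix (Fin 2) (Fin 2) ℝ) p)) :
    ∀ (t : List Ltr) (g l0 : Ltr) (p : ℝ × ℝ),
      List.Chain' (fun a b => b ≠ inv' a) (g :: t) →
      l0 ≠ inv' ((g :: t).getLast (List.cons_ne_nil g t)) →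
      0 ≤ Q v l0 p →
      0 ≤ Q v g (act ((((g :: t).map glf).prod : GL (Fin 2) ℝ) : Matrix (Fin 2) (Fin 2) ℝ) p) := by
  intro t
  induction t with
  | nil =>
      intro g l0 p _ hl0 hp
      have hl0' : l0 ≠ inv' g := by simpa using hl0
      simpa using hstep g l0 hl0' p hp
  | cons b t ih =>
      intro g l0 p hch hl0 hp
      obtain ⟨hgb, hch'⟩ := List.isChain_cons_cons.mp hch
      have hl0' : l0 ≠ inv' ((b :: t).getLast (List.cons_ne_nil b t)) := by
        rwa [List.getLast_cons (List.cons_ne_nil b t)] at hl0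
      have hin := ih b l0 p hch' hl0' hp
      have hmap : ((g :: b :: t).map glf).prod = glf g * ((b :: t).map glf).prod := by
        simp [List.map_cons, List.prod_cons]
      rw [hmap, Units.val_mul, act_mul]
      exact hstep g b hgb _ hin

end BurauPP

open BurauPP in
theorem burau_B3_neg_on_N (t₀ : ℝ) (ht : t₀ < 0)
    (S : B3 →* GL (Fin 2) ℝ) (hS : IsBurau3 t₀ S) :
    Function.Injective (S.domRestrict N3) ∧
      Nonempty (↥(N3.map S) ≃* FreeGroup (Fin 2)) ∧
      DiscreteTopology ↥(N3.map S) := by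
  obtain ⟨hS1, hS2⟩ := hS
  set u : ℝ := -t₀ with hu_def
  have hu : 0 < u := by rw [hu_def]; linarith
  set v : ℝ := u⁻¹ with hv_def
  have huv : u * v = 1 := mul_inv_cancel₀ (ne_of_gt hu)
  have hv : 0 < v := by rw [hv_def]; exact inv_pos.mpr hu
  have ht0 : t₀ = -u := by rw [hu_def]; ring
  -- the group elements and homomorphisms
  set fB : Fin 2 → B3 := fun i => if i = 0 then a₁ else a₂ with hfB
  set ψ : FreeGroup (Fin 2) →* B3 := FreeGroup.lift fB with hψ
  set f : Fin 2 → GL (Fin 2) ℝ := fun i => S (fB i) with hf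
  set φ : FreeGroup (Fin 2) →* GL (Fin 2) ℝ := FreeGroup.lift f with hφ
  have hcomp : S.comp ψ = φ := by
    refine FreeGroup.ext_hom _ _ (fun i => ?_)
    simp [hψ, hφ, hf]
  -- values of the matrices
  have hσ1 : ((S (b3 0) : GL (Fin 2) ℝ) : Matrix (Fin 2) (Fin 2) ℝ) = !![u, 1; 0, 1] := hS1
  have hσ2 : ((S (b3 1) : GL (Fin 2) ℝ) : Matrix (Fin 2) (Fin 2) ℝ) = !![1, 0; -u, u] := by
    rw [hS2, ht0]
  have hinv_val : ∀ (g : GL (Fin 2) ℝ) (B : Matrix (Fin 2) (Fin 2) ℝ),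
      (g : Matrix (Fin 2) (Fin 2) ℝ) * B = 1 →
      ((g⁻¹ : GL (Fin 2) ℝ) : Matrix (Fin 2) (Fin 2) ℝ) = B := by
    intro g B hgB
    have h1 : ((g⁻¹ : GL (Fin 2) ℝ) : Matrix (Fin 2) (Fin 2) ℝ) * (g : Matrix (Fin 2) (Fin 2) ℝ) = 1 := by
      rw [← Units.val_mul, inv_mul_cancel, Units.val_one]
    calc ((g⁻¹ : GL (Fin 2) ℝ) : Matrix (Fin 2) (Fin 2) ℝ)
        = ((g⁻¹ : GL (Fin 2) ℝ) : Matrix (Fin 2) (Fin 2) ℝ) * ((g : Matrix (Fin 2) (Fin 2) ℝ) * B) := by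
          rw [hgB, mul_one]
      _ = (((g⁻¹ : GL (Fin 2) ℝ) : Matrix (Fin 2) (Fin 2) ℝ) * (g : Matrix (Fin 2) (Fin 2) ℝ)) * B := by
          rw [mul_assoc]
      _ = B := by rw [h1, one_mul]
  have hσ1i : (((S (b3 0))⁻¹ : GL (Fin 2) ℝ) : Matrix (Fin 2) (Fin 2) ℝ) = !![v, -v; 0, 1] := by
    refine hinv_val _ _ ?_
    rw [hσ1]
    ext i j
    fin_cases i <;> fin_cases j <;>
      simp [Matrix.mul_apply, Fin.sum_univ_two, Matrix.one_apply] <;>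
      first
        | ring1
        | linear_combination huv
        | linear_combination (-1 : ℝ) * huv
        | linear_combination v * huv
        | linear_combination (-v) * huv
        | linear_combination u * huv
        | linear_combination (-u) * huv
  have hA1 : ((S a₁ : GL (Fin 2) ℝ) : Matrix (Fin 2) (Fin 2) ℝ) = !![1+v, -1; -u, u] := by
    have h : S a₁ = (S (b3 0))⁻¹ * S (b3 1) := by rw [a₁, _root_.map_mul, _root_.map_inv]
    rw [h, Units.val_mul, hσ1i, hσ2]
    ext i j
    fin_cases i <;> fin_cases j <;>
      simp [Matrix.mul_apply, Fin.sum_univ_two] <;>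
      first
        | ring1
        | linear_combination huv
        | linear_combination (-1 : ℝ) * huv
        | linear_combination v * huv
        | linear_combination (-v) * huv
        | linear_combination u * huv
        | linear_combination (-u) * huv
  have hA2 : ((S a₂ : GL (Fin 2) ℝ) : Matrix (Fin 2) (Fin 2) ℝ) = !![v, -v; -1, 1+u] := by
    have h : S a₂ = S (b3 1) * (S (b3 0))⁻¹ := by rw [a₂, _root_.map_mul, _root_.map_inv]
    rw [h, Units.val_mul, hσ1i, hσ2]
    ext i j
    fin_cases i <;> fin_cases j <;>
      simp [Matrix.mul_apply, Fin.sum_univ_two] <;>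
      first
        | ring1
        | linear_combination huv
        | linear_combination (-1 : ℝ) * huv
        | linear_combination v * huv
        | linear_combination (-v) * huv
        | linear_combination u * huv
        | linear_combination (-u) * huv
  have hA1i : (((S a₁)⁻¹ : GL (Fin 2) ℝ) : Matrix (Fin 2) (Fin 2) ℝ) = !![u, 1; u, 1+v] := by
    refine hinv_val _ _ ?_
    rw [hA1]
    ext i j
    fin_cases i <;> fin_cases j <;>
      simp [Matrix.mul_apply, Fin.sum_univ_two, Matrix.one_apply] <;>
      first
        | ring1
        | linear_combination huv
        | linear_combination (-1 : ℝ) * huv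
        | linear_combination v * huv
        | linear_combination (-v) * huv
        | linear_combination u * huv
        | linear_combination (-u) * huv
  have hA2i : (((S a₂)⁻¹ : GL (Fin 2) ℝ) : Matrix (Fin 2) (Fin 2) ℝ) = !![1+u, v; 1, v] := by
    refine hinv_val _ _ ?_
    rw [hA2]
    ext i j
    fin_cases i <;> fin_cases j <;>
      simp [Matrix.mul_apply, Fin.sum_univ_two, Matrix.one_apply] <;>
      first
        | ring1
        | linear_combination huv
        | linear_combination (-1 : ℝ) * huv
        | linear_combination v * huv
        | linear_combination (-v) * huv
        | linear_combination u * huv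
        | linear_combination (-u) * huv
  -- letters to GL elements
  set glf : Ltr → GL (Fin 2) ℝ := fun l => cond l.2 (f l.1) (f l.1)⁻¹ with hglf
  have hf0 : f 0 = S a₁ := by simp [hf, hfB]
  have hf1 : f 1 = S a₂ := by simp [hf, hfB]
  have hglf_act : ∀ (l : Ltr) (p : ℝ × ℝ),
      act ((glf l : GL (Fin 2) ℝ) : Matrix (Fin 2) (Fin 2) ℝ) p = imgp u v l p := by
    rintro ⟨i, b⟩ p
    fin_cases i <;> cases b
    · show act (((f 0)⁻¹ : GL (Fin 2) ℝ) : Matrix (Fin 2) (Fin 2) ℝ) p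
        = (u*p.1 + p.2, u*p.1 + (1+v)*p.2)
      rw [hf0, hA1i]
      show (u * p.1 + 1 * p.2, u * p.1 + (1+v) * p.2) = _
      rw [one_mul]
    · show act ((f 0 : GL (Fin 2) ℝ) : Matrix (Fin 2) (Fin 2) ℝ) p
        = ((1+v)*p.1 - p.2, -(u*p.1) + u*p.2)
      rw [hf0, hA1]
      show ((1+v) * p.1 + (-1) * p.2, (-u) * p.1 + u * p.2) = _
      exact Prod.ext (by ring) (by ring)
    · show act (((f 1)⁻¹ : GL (Fin 2) ℝ) : Matrix (Fin 2) (Fin 2) ℝ) p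
        = ((1+u)*p.1 + v*p.2, p.1 + v*p.2)
      rw [hf1, hA2i]
      show ((1+u) * p.1 + v * p.2, 1 * p.1 + v * p.2) = _
      rw [one_mul]
    · show act ((f 1 : GL (Fin 2) ℝ) : Matrix (Fin 2) (Fin 2) ℝ) p
        = (v*p.1 - v*p.2, -p.1 + (1+u)*p.2)
      rw [hf1, hA2]
      show (v * p.1 + (-v) * p.2, (-1) * p.1 + (1+u) * p.2) = _
      exact Prod.ext (by ring) (by ring)
  have hstep : ∀ g h : Ltr, h ≠ inv' g → ∀ p : ℝ × ℝ, 0 ≤ Q v h p →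
      0 ≤ Q v g (act ((glf g : GL (Fin 2) ℝ) : Matrix (Fin 2) (Fin 2) ℝ) p) := by
    intro g h hne p hp
    rw [hglf_act]
    exact step u v hu hv huv g h hne p.1 p.2 hp
  -- margin constants
  set m : ℝ := min u v / 8 with hm_def
  have hm0 : 0 < m := by
    rw [hm_def]
    have := lt_min hu hv
    positivity
  have h8u : 8 * m ≤ u := by
    rw [hm_def]; have := min_le_left u v; linarith
  have h8v : 8 * m ≤ v := by
    rw [hm_def]; have := min_le_right u v; linarith
  have h81 : 8 * m ≤ 1 := by
    rw [hm_def]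
    have h1 := min_le_left u v
    have h2 := min_le_right u v
    have h3 : 0 < min u v := lt_min hu hv
    nlinarith
  set ε : ℝ := m / (v + 4) with hε_def
  have hε0 : 0 < ε := by rw [hε_def]; positivity
  -- the key ping-pong consequence
  have key : ∀ w : FreeGroup (Fin 2), w ≠ 1 → ∃ g l0 : Ltr, g ≠ l0 ∧
      0 ≤ Q v g (act ((φ w : GL (Fin 2) ℝ) : Matrix (Fin 2) (Fin 2) ℝ) (bp v l0)) := by
    intro w hw
    have hL : w.toWord ≠ [] := fun h => hw (FreeGroup.toWord_eq_nil_iff.mp h)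
    obtain ⟨g, t, hgt⟩ := List.exists_cons_of_ne_nil hL
    obtain ⟨l0, hl1, hl2⟩ := pick (inv' ((g :: t).getLast (List.cons_ne_nil g t))) g
    have hch : List.Chain' (fun a b => b ≠ inv' a) (g :: t) := by
      rw [← hgt]; exact chain'_toWord w
    have hping := ping u v glf hstep t g l0 (bp v l0) hch hl1 (Qbp v hv l0)
    have hw_eq : φ w = ((g :: t).map glf).prod := by
      conv_lhs => rw [← FreeGroup.mk_toWord (x := w), hgt]
      exact FreeGroup.lift_mk
    exact ⟨g, l0, Ne.symm hl2, by rw [hw_eq]; exact hping⟩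
  -- injectivity of φ
  have hφinj : Function.Injective φ := by
    refine (injective_iff_map_eq_one φ).mpr (fun w hw1 => ?_)
    by_contra hne
    obtain ⟨g, l0, hgl, hQ⟩ := key w hne
    rw [hw1, Units.val_one, act_one] at hQ
    have hsep : Q v g ((bp v l0).1, (bp v l0).2) < 0 :=
      sepBox u v m hu hv huv hm0 h8v h8u h81 g l0 hgl (bp v l0).1 (bp v l0).2
        (by simp [hm0.le]) (by simp [hm0.le])
    have hQ' : 0 ≤ Q v g ((bp v l0).1, (bp v l0).2) := hQ
    linarith
  -- N3 is the range of ψ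
  have hrangefB : Set.range fB = {a₁, a₂} := by
    ext g
    constructor
    · rintro ⟨i, rfl⟩
      fin_cases i
      · left; simp [hfB]
      · right; simp [hfB]
    · rintro (rfl | rfl)
      · exact ⟨0, by simp [hfB]⟩
      · exact ⟨1, by simp [hfB]⟩
  have hN3 : N3 = ψ.range := by
    rw [hψ, FreeGroup.range_lift_eq_closure, hrangefB]; rfl
  have hmap : N3.map S = φ.range := by
    rw [hN3, ← MonoidHom.range_comp, hcomp]
  -- S is injective on N3
  have hinj : Function.Injective (S.domRestrict N3) := by
    intro n1 n2 h12
    have hm1 : (n1 : B3) ∈ ψ.range := by rw [← hN3]; exact n1.2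
    have hm2 : (n2 : B3) ∈ ψ.range := by rw [← hN3]; exact n2.2
    obtain ⟨w1, hw1⟩ := hm1
    obtain ⟨w2, hw2⟩ := hm2
    have hφ12 : φ w1 = φ w2 := by
      have e1 : φ w1 = S (n1 : B3) := by rw [← hcomp]; simp [MonoidHom.comp_apply, hw1]
      have e2 : φ w2 = S (n2 : B3) := by rw [← hcomp]; simp [MonoidHom.comp_apply, hw2]
      rw [e1, e2]
      simpa [MonoidHom.domRestrict_apply] using h12
    have hww : w1 = w2 := hφinj hφ12
    exact Subtype.ext (by rw [← hw1, ← hw2, hww])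
  -- bounds on the base points
  have hbp_bounds : ∀ l : Ltr, |(bp v l).1| ≤ v + 2 ∧ |(bp v l).2| ≤ 2 := by
    rintro ⟨i, b⟩
    fin_cases i <;> cases b
    · constructor
      · show |(-1 : ℝ)| ≤ v + 2
        rw [abs_le]; constructor <;> linarith
      · show |(-2 : ℝ)| ≤ 2
        norm_num
    · constructor
      · show |(1 + v : ℝ)| ≤ v + 2
        rw [abs_le]; constructor <;> linarith
      · show |(-1 : ℝ)| ≤ 2
        norm_num
    · constructor
      · show |(-2 : ℝ)| ≤ v + 2
        rw [abs_le]; constructor <;> linarith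
      · show |(-1 : ℝ)| ≤ 2
        norm_num
    · constructor
      · show |(v : ℝ)| ≤ v + 2
        rw [abs_le]; constructor <;> linarith
      · show |(-2 : ℝ)| ≤ 2
        norm_num
  -- elements of the image close to 1 are 1
  have hclose : ∀ n : GL (Fin 2) ℝ, n ∈ N3.map S →
      (∀ i j, |(n : Matrix (Fin 2) (Fin 2) ℝ) i j - (1 : Matrix (Fin 2) (Fin 2) ℝ) i j| < ε) →
      n = 1 := by
    intro n hn hij
    rw [hmap] at hn
    obtain ⟨w, hwn⟩ := hn
    by_cases hw1 : w = 1
    · rw [← hwn, hw1, _root_.map_one]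
    exfalso
    obtain ⟨g, l0, hgl, hQ⟩ := key w hw1
    rw [hwn] at hQ
    have h00 := hij 0 0
    have h01 := hij 0 1
    have h10 := hij 1 0
    have h11 := hij 1 1
    rw [Matrix.one_apply_eq] at h00 h11
    rw [Matrix.one_apply_ne (by decide)] at h01
    rw [Matrix.one_apply_ne (by decide)] at h10
    have hεm : ε * (v + 4) = m := by
      rw [hε_def]; field_simp
    have hq1 : |(act ((n : GL (Fin 2) ℝ) : Matrix (Fin 2) (Fin 2) ℝ) (bp v l0)).1 - (bp v l0).1| ≤ m := by
      have expand : (act ((n : GL (Fin 2) ℝ) : Matrix (Fin 2) (Fin 2) ℝ) (bp v l0)).1 - (bp v l0).1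
          = ((n : Matrix (Fin 2) (Fin 2) ℝ) 0 0 - 1) * (bp v l0).1
            + ((n : Matrix (Fin 2) (Fin 2) ℝ) 0 1 - 0) * (bp v l0).2 := by
        show ((n : Matrix (Fin 2) (Fin 2) ℝ) 0 0 * (bp v l0).1
            + (n : Matrix (Fin 2) (Fin 2) ℝ) 0 1 * (bp v l0).2) - (bp v l0).1 = _
        ring
      rw [expand]
      calc |((n : Matrix (Fin 2) (Fin 2) ℝ) 0 0 - 1) * (bp v l0).1
            + ((n : Matrix (Fin 2) (Fin 2) ℝ) 0 1 - 0) * (bp v l0).2|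
          ≤ |(n : Matrix (Fin 2) (Fin 2) ℝ) 0 0 - 1| * |(bp v l0).1|
            + |(n : Matrix (Fin 2) (Fin 2) ℝ) 0 1 - 0| * |(bp v l0).2| := by
            refine (abs_add_le _ _).trans ?_
            rw [abs_mul, abs_mul]
        _ ≤ ε * (v + 2) + ε * 2 := add_le_add
            (mul_le_mul h00.le (hbp_bounds l0).1 (abs_nonneg _) hε0.le)
            (mul_le_mul h01.le (hbp_bounds l0).2 (abs_nonneg _) hε0.le)
        _ = ε * (v + 4) := by ring
        _ = m := hεm
    have hq2 : |(act ((n : GL (Fin 2) ℝ) : Matrix (Fin 2) (Fin 2) ℝ) (bp v l0)).2 - (bp v l0).2| ≤ m := by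
      have expand : (act ((n : GL (Fin 2) ℝ) : Matrix (Fin 2) (Fin 2) ℝ) (bp v l0)).2 - (bp v l0).2
          = ((n : Matrix (Fin 2) (Fin 2) ℝ) 1 0 - 0) * (bp v l0).1
            + ((n : Matrix (Fin 2) (Fin 2) ℝ) 1 1 - 1) * (bp v l0).2 := by
        show ((n : Matrix (Fin 2) (Fin 2) ℝ) 1 0 * (bp v l0).1
            + (n : Matrix (Fin 2) (Fin 2) ℝ) 1 1 * (bp v l0).2) - (bp v l0).2 = _
        ring
      rw [expand]
      calc |((n : Matrix (Fin 2) (Fin 2) ℝ) 1 0 - 0) * (bp v l0).1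
            + ((n : Matrix (Fin 2) (Fin 2) ℝ) 1 1 - 1) * (bp v l0).2|
          ≤ |(n : Matrix (Fin 2) (Fin 2) ℝ) 1 0 - 0| * |(bp v l0).1|
            + |(n : Matrix (Fin 2) (Fin 2) ℝ) 1 1 - 1| * |(bp v l0).2| := by
            refine (abs_add_le _ _).trans ?_
            rw [abs_mul, abs_mul]
        _ ≤ ε * (v + 2) + ε * 2 := add_le_add
            (mul_le_mul h10.le (hbp_bounds l0).1 (abs_nonneg _) hε0.le)
            (mul_le_mul h11.le (hbp_bounds l0).2 (abs_nonneg _) hε0.le)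
        _ = ε * (v + 4) := by ring
        _ = m := hεm
    have hsep : Q v g ((act ((n : GL (Fin 2) ℝ) : Matrix (Fin 2) (Fin 2) ℝ) (bp v l0)).1,
        (act ((n : GL (Fin 2) ℝ) : Matrix (Fin 2) (Fin 2) ℝ) (bp v l0)).2) < 0 :=
      sepBox u v m hu hv huv hm0 h8v h8u h81 g l0 hgl _ _ hq1 hq2
    have hQ' : 0 ≤ Q v g ((act ((n : GL (Fin 2) ℝ) : Matrix (Fin 2) (Fin 2) ℝ) (bp v l0)).1,
        (act ((n : GL (Fin 2) ℝ) : Matrix (Fin 2) (Fin 2) ℝ) (bp v l0)).2) := hQ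
    linarith
  refine ⟨hinj, ⟨(MulEquiv.subgroupCongr hmap).trans (MonoidHom.ofInjective hφinj).symm⟩, ?_⟩
  -- discreteness
  have hUopen : IsOpen {n : GL (Fin 2) ℝ |
      ∀ i j, |(n : Matrix (Fin 2) (Fin 2) ℝ) i j - (1 : Matrix (Fin 2) (Fin 2) ℝ) i j| < ε} := by
    have hEq : {n : GL (Fin 2) ℝ |
        ∀ i j, |(n : Matrix (Fin 2) (Fin 2) ℝ) i j - (1 : Matrix (Fin 2) (Fin 2) ℝ) i j| < ε}
        = ⋂ (i : Fin 2) (j : Fin 2), {n : GL (Fin 2) ℝ |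
            |(n : Matrix (Fin 2) (Fin 2) ℝ) i j - (1 : Matrix (Fin 2) (Fin 2) ℝ) i j| < ε} := by
      ext n; simp [Set.mem_iInter]
    rw [hEq]
    refine isOpen_iInter_of_finite fun i => isOpen_iInter_of_finite fun j => ?_
    have hc : Continuous fun n : GL (Fin 2) ℝ =>
        |(n : Matrix (Fin 2) (Fin 2) ℝ) i j - (1 : Matrix (Fin 2) (Fin 2) ℝ) i j| :=
      ((Units.continuous_val.matrix_elem i j).sub continuous_const).abs
    exact isOpen_Iio.preimage hc
  refine discreteTopology_iff_isOpen_singleton.mpr ?_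
  rintro ⟨x, hx⟩
  have hV : IsOpen {g : GL (Fin 2) ℝ |
      ∀ i j, |((x⁻¹ * g : GL (Fin 2) ℝ) : Matrix (Fin 2) (Fin 2) ℝ) i j
        - (1 : Matrix (Fin 2) (Fin 2) ℝ) i j| < ε} :=
    hUopen.preimage (continuous_const.mul continuous_id)
  have hpre : IsOpen (Subtype.val ⁻¹' {g : GL (Fin 2) ℝ |
      ∀ i j, |((x⁻¹ * g : GL (Fin 2) ℝ) : Matrix (Fin 2) (Fin 2) ℝ) i j
        - (1 : Matrix (Fin 2) (Fin 2) ℝ) i j| < ε} : Set ↥(N3.map S)) :=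
    hV.preimage continuous_subtype_val
  have hsing : ({⟨x, hx⟩} : Set ↥(N3.map S)) = Subtype.val ⁻¹' {g : GL (Fin 2) ℝ |
      ∀ i j, |((x⁻¹ * g : GL (Fin 2) ℝ) : Matrix (Fin 2) (Fin 2) ℝ) i j
        - (1 : Matrix (Fin 2) (Fin 2) ℝ) i j| < ε} := by
    ext y
    simp only [Set.mem_singleton_iff, Set.mem_preimage, Set.mem_setOf_eq]
    constructor
    · rintro rfl
      intro i j
      rw [inv_mul_cancel, Units.val_one]
      simpa using hε0
    · intro h
      have hxyH : (x⁻¹ * (y : GL (Fin 2) ℝ)) ∈ N3.map S :=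
        mul_mem (inv_mem hx) y.2
      have h1 : x⁻¹ * (y : GL (Fin 2) ℝ) = 1 := hclose _ hxyH h
      have h2 : x = (y : GL (Fin 2) ℝ) := inv_mul_eq_one.mp h1
      exact Subtype.ext h2.symm
  rw [hsing]
  exact hpre
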